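/- Let r, m ≥ 1, let h₁, …, h_m ∈ ℝ^r, and let λ ∈ ℝ^r satisfy 1 + ⟨λ, h_i⟩ > 0 for every i and ∑_{i=1}^m h_i / (1 + ⟨λ, h_i⟩) = 0, where ⟨·,·⟩ is the Euclidean inner product. Define w_i := 1 / ( m·(1 + ⟨λ, h_i⟩) ). Then: (i) w_i > 0 for all i, ∑_{i=1}^m w_i = 1, and ∑_{i=1}^m w_i h_i = 0, so w lies in the empirical-likelihood constraint set; and (ii) for every v ∈ Δ_{m−1} with ∑_{i=1}^m v_i h_i = 0 one has ∏_{i=1}^m v_i ≤ ∏_{i=1}^m w_i, i.e. w maximizes ∏_{i=1}^m (m·w_i) over the constraint set. (This is the Lagrangian dual representation of the optimal empirical-likelihood weights ŵ_i = {m(1+λ̂ᵀh_i)}^{−1}.) -/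

import Mathlib

open scoped RealInnerProductSpace

/-- Lagrangian dual representation of the optimal empirical-likelihood weights
`ŵ_i = (m(1 + ⟪λ, h_i⟫))⁻¹`: they lie in the empirical-likelihood constraint set and maximize
`∏ v_i` over it. -/
theorem el_dual_weights_optimal (r m : ℕ) (hr : 1 ≤ r) (hm : 1 ≤ m)
    (h : Fin m → EuclideanSpace ℝ (Fin r)) (l : EuclideanSpace ℝ (Fin r))
    (hpos : ∀ i, 0 < 1 + ⟪l, h i⟫)
    (hsum : ∑ i, (1 + ⟪l, h i⟫)⁻¹ • h i = 0)
    (w : Fin m → ℝ) (hw : ∀ i, w i = ((m : ℝ) * (1 + ⟪l, h i⟫))⁻¹) :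
    (∀ i, 0 < w i) ∧ (∑ i, w i = 1) ∧ (∑ i, w i • h i = 0)
    ∧ ∀ v : Fin m → ℝ, (∀ i, 0 ≤ v i) → (∑ i, v i = 1) →
        (∑ i, v i • h i = 0) → ∏ i, v i ≤ ∏ i, w i := by
  have hm0 : (0:ℝ) < m := by exact_mod_cast hm
  have hwpos : ∀ i, 0 < w i := fun i => by
    rw [hw]; exact inv_pos.mpr (mul_pos hm0 (hpos i))
  have hinner : ∀ (c : Fin m → ℝ), ⟪l, ∑ i, c i • h i⟫ = ∑ i, c i * ⟪l, h i⟫ := by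
    intro c
    rw [inner_sum]
    exact Finset.sum_congr rfl fun i _ => real_inner_smul_right _ _ _
  have key : ∑ i, (1 + ⟪l, h i⟫)⁻¹ * ⟪l, h i⟫ = 0 := by
    have := congrArg (fun x : EuclideanSpace ℝ (Fin r) => ⟪l, x⟫) hsum
    simpa [hinner] using this
  have hsum1 : ∑ i, (1 + ⟪l, h i⟫)⁻¹ = (m : ℝ) := by
    have e : ∀ i ∈ Finset.univ, (1 + ⟪l, h i⟫)⁻¹
        = 1 - (1 + ⟪l, h i⟫)⁻¹ * ⟪l, h i⟫ := by
      intro i _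
      have hne := (hpos i).ne'
      set t := ⟪l, h i⟫ with ht
      field_simp
      ring
    rw [Finset.sum_congr rfl e, Finset.sum_sub_distrib, key]
    simp
  have hwsum : ∑ i, w i = 1 := by
    have : ∑ i, w i = (m : ℝ)⁻¹ * ∑ i, (1 + ⟪l, h i⟫)⁻¹ := by
      rw [Finset.mul_sum]
      exact Finset.sum_congr rfl fun i _ => by rw [hw, mul_inv]
    rw [this, hsum1, inv_mul_cancel₀ hm0.ne']
  have hwh : ∑ i, w i • h i = 0 := by
    have : ∑ i, w i • h i = (m : ℝ)⁻¹ • ∑ i, (1 + ⟪l, h i⟫)⁻¹ • h i := by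
      rw [Finset.smul_sum]
      exact Finset.sum_congr rfl fun i _ => by rw [hw, mul_inv, smul_smul]
    rw [this, hsum, smul_zero]
  refine ⟨hwpos, hwsum, hwh, ?_⟩
  intro v hv hv1 hvh
  set x : Fin m → ℝ := fun i => v i / w i with hx
  have hxnn : ∀ i, 0 ≤ x i := fun i => div_nonneg (hv i) (hwpos i).le
  have hxsum : ∑ i, x i = (m : ℝ) := by
    have e : ∀ i ∈ Finset.univ, x i = (m : ℝ) * v i + (m : ℝ) * (v i * ⟪l, h i⟫) := by
      intro i _
      have hne := (hpos i).ne'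
      simp only [hx, hw]
      set t := ⟪l, h i⟫ with ht
      field_simp
    have hvt : ∑ i, v i * ⟪l, h i⟫ = 0 := by
      have := congrArg (fun x : EuclideanSpace ℝ (Fin r) => ⟪l, x⟫) hvh
      simpa [hinner] using this
    rw [Finset.sum_congr rfl e, Finset.sum_add_distrib, ← Finset.mul_sum, ← Finset.mul_sum,
      hv1, hvt, mul_one, mul_zero, add_zero]
  -- AM-GM with equal weights
  have amgm := Real.geom_mean_le_arith_mean_weighted Finset.univ (fun _ => (m : ℝ)⁻¹) x
    (fun i _ => (inv_pos.mpr hm0).le)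
    (by simp [Finset.card_univ]; field_simp)
    (fun i _ => hxnn i)
  have hrhs : ∑ i, (m : ℝ)⁻¹ * x i = 1 := by
    rw [← Finset.mul_sum, hxsum, inv_mul_cancel₀ hm0.ne']
  rw [hrhs] at amgm
  have hprodpow : ∏ i, x i ^ (m : ℝ)⁻¹ = (∏ i, x i) ^ (m : ℝ)⁻¹ := by
    rw [← Real.finset_prod_rpow _ _ (fun i _ => hxnn i)]
  have hxprod_le : ∏ i, x i ≤ 1 := by
    have hnn : 0 ≤ ∏ i, x i := Finset.prod_nonneg fun i _ => hxnn i
    rw [hprodpow] at amgm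
    by_contra hc
    push_neg at hc
    have := Real.one_lt_rpow_iff_of_pos (lt_trans one_pos hc) (y := (m : ℝ)⁻¹)
    have h1 : 1 < (∏ i, x i) ^ (m : ℝ)⁻¹ := this.mpr (Or.inl ⟨hc, inv_pos.mpr hm0⟩)
    linarith
  have hvw : ∏ i, v i = (∏ i, x i) * ∏ i, w i := by
    rw [← Finset.prod_mul_distrib]
    exact Finset.prod_congr rfl fun i _ => (div_mul_cancel₀ _ (hwpos i).ne').symm
  rw [hvw]
  calc (∏ i, x i) * ∏ i, w i ≤ 1 * ∏ i, w i := by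
        apply mul_le_mul_of_nonneg_right hxprod_le
        exact Finset.prod_nonneg fun i _ => (hwpos i).le
    _ = ∏ i, w i := one_mul _
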